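/- Tight relaxation with mixed extensions: let R̂ = R̂₁ - R̂₂ and Ŝ = Ŝ₁ - Ŝ₂ be non-negative set functions decomposed into differences of submodular functions (all vanishing on ∅). Let R₁, S₂ be the Lovasz extensions of R̂₁, Ŝ₂, and let R'₂, S'₁ be positively one-homogeneous convex functions with R'₂(1_A)=R̂₂(A), S'₁(1_A)=Ŝ₁(A) for all A, such that S'₁ - S₂ is non-negative. Then inf_{C ⊆ V} R̂(C)/Ŝ(C) = inf_{f ∈ ℝ₊^n} (R₁(f)-R'₂(f))/(S'₁(f)-S₂(f)), and for all f ∈ ℝ₊^n, (R₁(f)-R'₂(f))/(S'₁(f)-S₂(f)) ≥ min_i R̂(C_i)/Ŝ(C_i). -/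

import Mathlib

open Finset

noncomputable def sortedVal {n : ℕ} (f : Fin n → ℝ) : Fin n → ℝ := f ∘ Tuple.sort f

noncomputable def thresholdSet {n : ℕ} (f : Fin n → ℝ) (i : Fin n) : Finset (Fin n) :=
  Finset.univ.filter (fun j => sortedVal f i ≤ f j)

noncomputable def lovasz {n : ℕ} (R : Finset (Fin n) → ℝ) (f : Fin n → ℝ) : ℝ :=
  (∑ i : Fin n, if h : (i : ℕ) + 1 < n then
      R (thresholdSet f ⟨(i : ℕ) + 1, h⟩) * (sortedVal f ⟨(i : ℕ) + 1, h⟩ - sortedVal f i)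
    else 0)
  + R Finset.univ * (if h : 0 < n then sortedVal f ⟨0, h⟩ else 0)

noncomputable def myW {n : ℕ} (f : Fin n → ℝ) (i : Fin n) : ℝ :=
  if h : (i : ℕ) + 1 < n then sortedVal f ⟨(i : ℕ) + 1, h⟩ - sortedVal f i
  else sortedVal f ⟨0, i.pos⟩
def myIdx {n : ℕ} (i : Fin n) : Fin n :=
  if h : (i : ℕ) + 1 < n then ⟨(i : ℕ) + 1, h⟩ else ⟨0, i.pos⟩
noncomputable def ind {n : ℕ} (C : Finset (Fin n)) : Fin n → ℝ := fun j => if j ∈ C then 1 else 0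
lemma sorted_mono {n : ℕ} (f : Fin n → ℝ) : Monotone (sortedVal f) := Tuple.monotone_sort f
lemma sortedVal_symm {n : ℕ} (f : Fin n → ℝ) (j : Fin n) :
    sortedVal f ((Tuple.sort f).symm j) = f j := by simp [sortedVal]
lemma sorted_zero_le {n : ℕ} (f : Fin n → ℝ) (j : Fin n) (h : 0 < n) :
    sortedVal f ⟨0, h⟩ ≤ f j := by
  rw [← sortedVal_symm f j]; exact sorted_mono f (by simp [Fin.le_def])
lemma le_sorted_last {n : ℕ} (f : Fin n → ℝ) (j : Fin n) (h : n - 1 < n) :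
    f j ≤ sortedVal f ⟨n - 1, h⟩ := by
  rw [← sortedVal_symm f j]; exact sorted_mono f (by simp [Fin.le_def]; omega)
lemma mem_thresholdSet {n : ℕ} (f : Fin n → ℝ) (i j : Fin n) :
    j ∈ thresholdSet f i ↔ sortedVal f i ≤ f j := by simp [thresholdSet]
lemma thresholdSet_zero {n : ℕ} (f : Fin n → ℝ) (h : 0 < n) :
    thresholdSet f ⟨0, h⟩ = univ := by
  ext j; simp [mem_thresholdSet, sorted_zero_le f j h]
lemma thresholdSet_nonempty {n : ℕ} (f : Fin n → ℝ) (i : Fin n) :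
    (thresholdSet f i).Nonempty :=
  ⟨Tuple.sort f i, by simp [mem_thresholdSet, sortedVal]⟩

lemma myW_nonneg {n : ℕ} (f : Fin n → ℝ) (hf : ∀ i, 0 ≤ f i) (i : Fin n) : 0 ≤ myW f i := by
  unfold myW
  split
  · exact sub_nonneg.2 (sorted_mono f (by simp [Fin.le_def]))
  · exact hf _

lemma lovasz_eq_sum {n : ℕ} (R : Finset (Fin n) → ℝ) (f : Fin n → ℝ) :
    lovasz R f = ∑ i : Fin n, myW f i * R (thresholdSet f (myIdx i)) := by
  rcases Nat.eq_zero_or_pos n with hn | hn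
  · subst hn; simp [lovasz]
  have key : ∀ i : Fin n,
      myW f i * R (thresholdSet f (myIdx i)) =
      (if h : (i : ℕ) + 1 < n then
        R (thresholdSet f ⟨(i : ℕ) + 1, h⟩) * (sortedVal f ⟨(i : ℕ) + 1, h⟩ - sortedVal f i)
       else 0)
      + (if ((i : ℕ) + 1 < n) then 0 else R univ * sortedVal f ⟨0, hn⟩) := by
    intro i
    by_cases h : (i : ℕ) + 1 < n
    · simp only [myW, myIdx, dif_pos h, if_pos h, add_zero]; ring
    · simp only [myW, myIdx, dif_neg h, if_neg h, thresholdSet_zero f i.pos, zero_add]; ring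
  rw [Finset.sum_congr rfl (fun i _ => key i), Finset.sum_add_distrib]
  unfold lovasz
  congr 1
  rw [dif_pos hn]
  symm
  have hiff : ∀ i : Fin n, (¬ ((i : ℕ) + 1 < n)) ↔ i = ⟨n - 1, by omega⟩ := by
    intro i
    constructor
    · intro h; ext; simp; omega
    · intro h; subst h; simp; omega
  calc (∑ i : Fin n, if ((i : ℕ) + 1 < n) then 0 else R univ * sortedVal f ⟨0, hn⟩)
      = ∑ i : Fin n, (if i = (⟨n - 1, by omega⟩ : Fin n) then R univ * sortedVal f ⟨0, hn⟩ else 0) := by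
        refine Finset.sum_congr rfl fun i _ => ?_
        by_cases h : (i : ℕ) + 1 < n
        · rw [if_pos h, if_neg (fun hc => (hiff i).2 hc h)]
        · rw [if_neg h, if_pos ((hiff i).1 h)]
    _ = R univ * sortedVal f ⟨0, hn⟩ := by
        rw [Finset.sum_ite_eq' univ _ (fun _ => R univ * sortedVal f ⟨0, hn⟩)]
        simp

-- the sum of weights
lemma sum_myW {n : ℕ} (f : Fin n → ℝ) (hn : 0 < n) :
    ∑ i : Fin n, myW f i = sortedVal f ⟨n - 1, by omega⟩ := by
  have g : ℕ → ℝ := fun m => sortedVal f ⟨min m (n - 1), by omega⟩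
  set g : ℕ → ℝ := fun m => sortedVal f ⟨min m (n - 1), by omega⟩ with hg
  have h' : ℕ → ℝ := fun m => if m + 1 < n then g (m + 1) - g m else sortedVal f ⟨0, hn⟩
  set h' : ℕ → ℝ := fun m => if m + 1 < n then g (m + 1) - g m else sortedVal f ⟨0, hn⟩ with hh
  have key : ∀ i : Fin n, myW f i = h' (i : ℕ) := by
    intro i
    by_cases h : (i : ℕ) + 1 < n
    · rw [hh]
      simp only [myW, dif_pos h, if_pos h, hg]
      have h1 : min ((i : ℕ) + 1) (n - 1) = (i : ℕ) + 1 := by omega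
      have h2 : min (i : ℕ) (n - 1) = (i : ℕ) := by have := i.isLt; omega
      congr 1 <;> simp [h1, h2]
    · rw [hh]; simp only [myW, dif_neg h, if_neg h]
  rw [Finset.sum_congr rfl (fun i _ => key i), Fin.sum_univ_eq_sum_range h' n]
  obtain ⟨m, rfl⟩ : ∃ m, n = m + 1 := ⟨n - 1, by omega⟩
  rw [Finset.sum_range_succ]
  have hlast : h' m = sortedVal f ⟨0, hn⟩ := by rw [hh]; simp
  have hsum : ∑ i ∈ Finset.range m, h' i = g m - g 0 := by
    rw [← Finset.sum_range_sub g m]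
    refine Finset.sum_congr rfl fun i hi => ?_
    rw [Finset.mem_range] at hi
    rw [hh]; simp only [if_pos (by omega : i + 1 < m + 1)]
  rw [hlast, hsum]
  have hgm : g m = sortedVal f ⟨m + 1 - 1, by omega⟩ := by rw [hg]; simp
  have hg0 : g 0 = sortedVal f ⟨0, hn⟩ := by
    rw [hg]; simp only; congr 1
  rw [hgm, hg0]; ring

lemma f_eq_sum {n : ℕ} (f : Fin n → ℝ) (hn : 0 < n) :
    f = ∑ i : Fin n, myW f i • ind (thresholdSet f (myIdx i)) := by
  funext j
  rw [Finset.sum_apply]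
  set g : ℕ → ℝ := fun m => min (sortedVal f ⟨min m (n - 1), by omega⟩) (f j) with hg
  set h' : ℕ → ℝ := fun m => if m + 1 < n then g (m + 1) - g m else sortedVal f ⟨0, hn⟩ with hh
  have key : ∀ i : Fin n, (myW f i • ind (thresholdSet f (myIdx i))) j = h' (i : ℕ) := by
    intro i
    rw [Pi.smul_apply, smul_eq_mul]
    by_cases h : (i : ℕ) + 1 < n
    · simp only [myW, myIdx, dif_pos h, ind, mem_thresholdSet]
      rw [hh]
      simp only [if_pos h, hg]
      have h1 : min ((i : ℕ) + 1) (n - 1) = (i : ℕ) + 1 := by omega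
      have h2 : min (i : ℕ) (n - 1) = (i : ℕ) := by have := i.isLt; omega
      have e1 : (⟨min ((i:ℕ) + 1) (n - 1), by omega⟩ : Fin n) = ⟨(i:ℕ) + 1, h⟩ := by
        ext; simp [h1]
      have e2 : (⟨min (i:ℕ) (n - 1), by omega⟩ : Fin n) = i := by ext; simp [h2]
      rw [e1, e2]
      by_cases hle : sortedVal f ⟨(i : ℕ) + 1, h⟩ ≤ f j
      · have h0 : sortedVal f i ≤ f j :=
          le_trans (sorted_mono f (by simp [Fin.le_def])) hle
        rw [if_pos (by simpa [mem_thresholdSet] using hle), min_eq_left hle, min_eq_left h0]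
        ring
      · have hfs : f j ≤ sortedVal f i := by
          by_contra hlt
          push_neg at hlt
          have hfk : f j = sortedVal f ((Tuple.sort f).symm j) := (sortedVal_symm f j).symm
          set k := (Tuple.sort f).symm j with hk
          have hik : (i : ℕ) < (k : ℕ) := by
            by_contra hc
            push_neg at hc
            have : sortedVal f k ≤ sortedVal f i := sorted_mono f (by rw [Fin.le_def]; exact hc)
            rw [← hfk] at this; linarith
          have : sortedVal f ⟨(i : ℕ) + 1, h⟩ ≤ sortedVal f k :=
            sorted_mono f (by rw [Fin.le_def]; exact hik)
          rw [← hfk] at this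
          exact hle this
        have hle' : f j < sortedVal f ⟨(i : ℕ) + 1, h⟩ := not_le.mp hle
        rw [if_neg hle, min_eq_right hle'.le, min_eq_right hfs]
        ring
    · have hre : h' (i : ℕ) = sortedVal f ⟨0, hn⟩ := by simp only [hh]; rw [if_neg h]
      rw [hre]
      simp only [myW, myIdx, dif_neg h, ind]
      rw [if_pos (by rw [mem_thresholdSet]; exact sorted_zero_le f j i.pos), mul_one]
  rw [Finset.sum_congr rfl (fun i _ => key i), Fin.sum_univ_eq_sum_range h' n]
  obtain ⟨m, rfl⟩ : ∃ m, n = m + 1 := ⟨n - 1, by omega⟩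
  rw [Finset.sum_range_succ]
  have hlast : h' m = sortedVal f ⟨0, hn⟩ := by rw [hh]; simp
  have hsum : ∑ i ∈ Finset.range m, h' i = g m - g 0 := by
    rw [← Finset.sum_range_sub g m]
    refine Finset.sum_congr rfl fun i hi => ?_
    rw [Finset.mem_range] at hi
    rw [hh]; simp only [if_pos (by omega : i + 1 < m + 1)]
  rw [hlast, hsum]
  have hgm : g m = f j := by
    rw [hg]; simp only
    have e : (⟨min m (m + 1 - 1), by omega⟩ : Fin (m + 1)) = ⟨m + 1 - 1, by omega⟩ := by
      ext; simp
    rw [e]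
    exact min_eq_right (le_sorted_last f j (by omega))
  have hg0 : g 0 = sortedVal f ⟨0, hn⟩ := by
    rw [hg]; simp only
    have : (⟨min 0 (m + 1 - 1), by omega⟩ : Fin (m + 1)) = ⟨0, hn⟩ := by ext; simp
    rw [this]
    exact min_eq_left (sorted_zero_le f j hn)
  rw [hgm, hg0]; ring

lemma lovasz_ind {n : ℕ} (R : Finset (Fin n) → ℝ) (C : Finset (Fin n)) (hC : C.Nonempty) :
    lovasz R (ind C) = R C := by
  obtain ⟨j₀, hj₀⟩ := hC
  have hn : 0 < n := j₀.pos
  set f := ind C with hf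
  have hval : ∀ i : Fin n, sortedVal f i = 0 ∨ sortedVal f i = 1 := by
    intro i
    simp only [sortedVal, Function.comp, hf, ind]
    split <;> simp
  have hfj : ∀ j : Fin n, (j ∈ C ↔ 1 ≤ f j) := by
    intro j
    rw [hf]; simp only [ind]
    split <;> simp_all
  have hlast : sortedVal f ⟨n - 1, by omega⟩ = 1 := by
    have h1 : (1 : ℝ) ≤ f j₀ := (hfj j₀).1 hj₀
    have h2 := le_sorted_last f j₀ (by omega)
    rcases hval ⟨n - 1, by omega⟩ with h | h
    · rw [h] at h2; linarith
    · exact h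
  have hterm : ∀ i : Fin n, myW f i * R (thresholdSet f (myIdx i)) = myW f i * R C := by
    intro i
    by_cases hw : myW f i = 0
    · rw [hw]; ring
    congr 2
    by_cases h : (i : ℕ) + 1 < n
    · have hs1 : sortedVal f ⟨(i : ℕ) + 1, h⟩ = 1 := by
        rcases hval ⟨(i : ℕ) + 1, h⟩ with h1 | h1
        · exfalso
          rcases hval i with h2 | h2
          · exact hw (by simp only [myW, dif_pos h, h1, h2]; ring)
          · have := sorted_mono f (show i ≤ ⟨(i : ℕ) + 1, h⟩ by rw [Fin.le_def]; simp)
            rw [h1, h2] at this; linarith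
        · exact h1
      simp only [myIdx, dif_pos h]
      ext j
      rw [mem_thresholdSet, hs1, ← hfj j]
    · have hs0 : sortedVal f ⟨0, i.pos⟩ = 1 := by
        rcases hval ⟨0, i.pos⟩ with h1 | h1
        · exact absurd (by simp only [myW, dif_neg h, h1]) hw
        · exact h1
      simp only [myIdx, dif_neg h]
      rw [thresholdSet_zero f i.pos]
      symm
      ext j
      simp only [mem_univ, iff_true]
      rw [hfj j]
      calc (1 : ℝ) = sortedVal f ⟨0, i.pos⟩ := hs0.symm
        _ ≤ f j := sorted_zero_le f j i.pos
  rw [lovasz_eq_sum, Finset.sum_congr rfl (fun i _ => hterm i), ← Finset.sum_mul,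
    sum_myW f hn, hlast, one_mul]

lemma subadd {n : ℕ} (R' : (Fin n → ℝ) → ℝ) (hc : ConvexOn ℝ Set.univ R')
    (hom : ∀ α : ℝ, 0 ≤ α → ∀ f : Fin n → ℝ, R' (α • f) = α * R' f)
    (x y : Fin n → ℝ) : R' (x + y) ≤ R' x + R' y := by
  have h2 := hc.2 (Set.mem_univ x) (Set.mem_univ y) (by norm_num : (0:ℝ) ≤ 1/2)
    (by norm_num : (0:ℝ) ≤ 1/2) (by norm_num : (1/2 : ℝ) + 1/2 = 1)
  have he : (1/2 : ℝ) • x + (1/2 : ℝ) • y = (1/2 : ℝ) • (x + y) := by rw [smul_add]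
  rw [he, hom (1/2) (by norm_num)] at h2
  simp only [smul_eq_mul] at h2
  linarith

lemma sublin_sum {n : ℕ} (R' : (Fin n → ℝ) → ℝ) (hc : ConvexOn ℝ Set.univ R')
    (hom : ∀ α : ℝ, 0 ≤ α → ∀ f : Fin n → ℝ, R' (α • f) = α * R' f)
    {ι : Type*} (s : Finset ι) (g : ι → (Fin n → ℝ)) :
    R' (∑ i ∈ s, g i) ≤ ∑ i ∈ s, R' (g i) := by
  classical
  have h0 : R' 0 = 0 := by
    have := hom 0 le_rfl 0
    simpa using this
  induction s using Finset.cons_induction with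
  | empty => simp [h0]
  | cons a s ha ih =>
    rw [Finset.sum_cons, Finset.sum_cons]
    exact le_trans (subadd R' hc hom _ _) (by linarith)

lemma ext_le_lovasz {n : ℕ} (R' : (Fin n → ℝ) → ℝ) (R : Finset (Fin n) → ℝ)
    (hc : ConvexOn ℝ Set.univ R')
    (hom : ∀ α : ℝ, 0 ≤ α → ∀ f : Fin n → ℝ, R' (α • f) = α * R' f)
    (hext : ∀ A : Finset (Fin n), R' (fun j => if j ∈ A then 1 else 0) = R A)
    (f : Fin n → ℝ) (hf : ∀ i, 0 ≤ f i) (hn : 0 < n) :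
    R' f ≤ lovasz R f := by
  have hext' : ∀ A : Finset (Fin n), R' (ind A) = R A := hext
  calc R' f = R' (∑ i : Fin n, myW f i • ind (thresholdSet f (myIdx i))) := by
        rw [← f_eq_sum f hn]
    _ ≤ ∑ i : Fin n, R' (myW f i • ind (thresholdSet f (myIdx i))) :=
        sublin_sum R' hc hom _ _
    _ = ∑ i : Fin n, myW f i * R (thresholdSet f (myIdx i)) := by
        refine Finset.sum_congr rfl fun i _ => ?_
        rw [hom (myW f i) (myW_nonneg f hf i), hext']
    _ = lovasz R f := (lovasz_eq_sum R f).symm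

lemma key_lemma {n : ℕ}
    (R₁ R₂ S₁ S₂ : Finset (Fin n) → ℝ)
    (hRpos : ∀ A : Finset (Fin n), 0 ≤ R₁ A - R₂ A)
    (hSpos : ∀ A : Finset (Fin n), 0 ≤ S₁ A - S₂ A)
    (R₂' S₁' : (Fin n → ℝ) → ℝ)
    (hR₂'conv : ConvexOn ℝ Set.univ R₂') (hS₁'conv : ConvexOn ℝ Set.univ S₁')
    (hR₂'hom : ∀ α : ℝ, 0 ≤ α → ∀ f : Fin n → ℝ, R₂' (α • f) = α * R₂' f)
    (hS₁'hom : ∀ α : ℝ, 0 ≤ α → ∀ f : Fin n → ℝ, S₁' (α • f) = α * S₁' f)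
    (hR₂'ext : ∀ A : Finset (Fin n), R₂' (fun j => if j ∈ A then 1 else 0) = R₂ A)
    (hS₁'ext : ∀ A : Finset (Fin n), S₁' (fun j => if j ∈ A then 1 else 0) = S₁ A)
    (f : Fin n → ℝ) (hf : ∀ i, 0 ≤ f i) (hD : 0 < S₁' f - lovasz S₂ f) :
    ∃ i : Fin n, 0 < S₁ (thresholdSet f i) - S₂ (thresholdSet f i) ∧
      (R₁ (thresholdSet f i) - R₂ (thresholdSet f i))
          / (S₁ (thresholdSet f i) - S₂ (thresholdSet f i))
        ≤ (lovasz R₁ f - R₂' f) / (S₁' f - lovasz S₂ f) := by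
  have hn : 0 < n := by
    rcases Nat.eq_zero_or_pos n with hn | hn
    · exfalso
      subst hn
      have hf0 : f = (0 : ℝ) • f := funext fun i => i.elim0
      have h1 : S₁' f = 0 := by
        rw [hf0, hS₁'hom 0 le_rfl f]; ring
      have h2 : lovasz S₂ f = 0 := by simp [lovasz]
      rw [h1, h2] at hD; linarith
    · exact hn
  classical
  set a : Fin n → ℝ := fun i => R₁ (thresholdSet f (myIdx i)) - R₂ (thresholdSet f (myIdx i)) with ha
  set b : Fin n → ℝ := fun i => S₁ (thresholdSet f (myIdx i)) - S₂ (thresholdSet f (myIdx i)) with hb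
  set N := lovasz R₁ f - R₂' f with hN
  set D := S₁' f - lovasz S₂ f with hDdef
  have hNa : ∑ i : Fin n, myW f i * a i ≤ N := by
    have h1 : R₂' f ≤ lovasz R₂ f := ext_le_lovasz R₂' R₂ hR₂'conv hR₂'hom hR₂'ext f hf hn
    have h2 : lovasz R₁ f = ∑ i : Fin n, myW f i * R₁ (thresholdSet f (myIdx i)) :=
      lovasz_eq_sum R₁ f
    have h3 : lovasz R₂ f = ∑ i : Fin n, myW f i * R₂ (thresholdSet f (myIdx i)) :=
      lovasz_eq_sum R₂ f
    have : ∑ i : Fin n, myW f i * a i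
        = lovasz R₁ f - lovasz R₂ f := by
      rw [h2, h3, ← Finset.sum_sub_distrib]
      refine Finset.sum_congr rfl fun i _ => ?_
      rw [ha]; ring
    rw [this, hN]; linarith
  have hDb : D ≤ ∑ i : Fin n, myW f i * b i := by
    have h1 : S₁' f ≤ lovasz S₁ f := ext_le_lovasz S₁' S₁ hS₁'conv hS₁'hom hS₁'ext f hf hn
    have h2 : lovasz S₁ f = ∑ i : Fin n, myW f i * S₁ (thresholdSet f (myIdx i)) :=
      lovasz_eq_sum S₁ f
    have h3 : lovasz S₂ f = ∑ i : Fin n, myW f i * S₂ (thresholdSet f (myIdx i)) :=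
      lovasz_eq_sum S₂ f
    have : ∑ i : Fin n, myW f i * b i = lovasz S₁ f - lovasz S₂ f := by
      rw [h2, h3, ← Finset.sum_sub_distrib]
      refine Finset.sum_congr rfl fun i _ => ?_
      rw [hb]; ring
    rw [this, hDdef]; linarith
  set supp : Finset (Fin n) := univ.filter (fun i => 0 < myW f i * b i) with hsupp
  have hsuppne : supp.Nonempty := by
    have hlt : ∑ i : Fin n, (0 : ℝ) < ∑ i : Fin n, myW f i * b i := by
      rw [Finset.sum_const, smul_zero]; linarith
    obtain ⟨i, _, hi⟩ := Finset.exists_lt_of_sum_lt hlt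
    exact ⟨i, by rw [hsupp]; simp only [Finset.mem_filter, mem_univ, true_and]; exact hi⟩
  obtain ⟨i₀, hi₀mem, hmin⟩ := Finset.exists_min_image supp (fun i => a i / b i) hsuppne
  have hbpos : ∀ i ∈ supp, 0 < b i := by
    intro i hi
    rw [hsupp, Finset.mem_filter] at hi
    by_contra hc
    push_neg at hc
    nlinarith [myW_nonneg f hf i, hi.2]
  have hb₀ : 0 < b i₀ := hbpos i₀ hi₀mem
  set c := a i₀ / b i₀ with hc
  have hcnn : 0 ≤ c := div_nonneg (hRpos _) hb₀.le
  have hterm : ∀ i : Fin n, c * (myW f i * b i) ≤ myW f i * a i := by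
    intro i
    by_cases hm : i ∈ supp
    · have hbi : 0 < b i := hbpos i hm
      have h1 : c ≤ a i / b i := hmin i hm
      have h2 : c * b i ≤ a i := by
        rw [hc, div_mul_eq_mul_div, div_le_iff₀ hb₀]
        rw [div_le_div_iff₀ hb₀ hbi] at h1
        linarith
      nlinarith [myW_nonneg f hf i]
    · have h1 : myW f i * b i ≤ 0 := by
        rw [hsupp, Finset.mem_filter] at hm
        simp only [mem_univ, true_and, not_lt] at hm
        exact hm
      have h2 : 0 ≤ myW f i * b i := mul_nonneg (myW_nonneg f hf i) (hSpos _)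
      have h3 : myW f i * b i = 0 := le_antisymm h1 h2
      rw [h3, mul_zero]
      exact mul_nonneg (myW_nonneg f hf i) (hRpos _)
  have hcD : c * D ≤ N := by
    calc c * D ≤ c * ∑ i : Fin n, myW f i * b i := by
          exact mul_le_mul_of_nonneg_left hDb hcnn
      _ = ∑ i : Fin n, c * (myW f i * b i) := by rw [Finset.mul_sum]
      _ ≤ ∑ i : Fin n, myW f i * a i := Finset.sum_le_sum fun i _ => hterm i
      _ ≤ N := hNa
  refine ⟨myIdx i₀, hb₀, ?_⟩
  have : c ≤ N / D := (le_div_iff₀ hD).2 hcD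
  exact this

def Submodular {α : Type*} [DecidableEq α] (R : Finset α → ℝ) : Prop :=
  ∀ A B : Finset α, R (A ∪ B) + R (A ∩ B) ≤ R A + R B

/-- tight relaxation with mixed extensions R₁ - R₂' and S₁' - S₂,
plus the optimal-thresholding inequality. -/
theorem tight_relaxation_mixed {n : ℕ}
    (R₁ R₂ S₁ S₂ : Finset (Fin n) → ℝ)
    (hR₁ : Submodular R₁) (hR₂ : Submodular R₂)
    (hS₁ : Submodular S₁) (hS₂ : Submodular S₂)
    (hR₁0 : R₁ ∅ = 0) (hR₂0 : R₂ ∅ = 0) (hS₁0 : S₁ ∅ = 0) (hS₂0 : S₂ ∅ = 0)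
    (hRpos : ∀ A : Finset (Fin n), 0 ≤ R₁ A - R₂ A)
    (hSpos : ∀ A : Finset (Fin n), 0 ≤ S₁ A - S₂ A)
    (R₂' S₁' : (Fin n → ℝ) → ℝ)
    (hR₂'conv : ConvexOn ℝ Set.univ R₂') (hS₁'conv : ConvexOn ℝ Set.univ S₁')
    (hR₂'hom : ∀ α : ℝ, 0 ≤ α → ∀ f : Fin n → ℝ, R₂' (α • f) = α * R₂' f)
    (hS₁'hom : ∀ α : ℝ, 0 ≤ α → ∀ f : Fin n → ℝ, S₁' (α • f) = α * S₁' f)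
    (hR₂'ext : ∀ A : Finset (Fin n), R₂' (fun j => if j ∈ A then 1 else 0) = R₂ A)
    (hS₁'ext : ∀ A : Finset (Fin n), S₁' (fun j => if j ∈ A then 1 else 0) = S₁ A)
    (hden : ∀ f : Fin n → ℝ, 0 ≤ S₁' f - lovasz S₂ f) :
    (sInf {q : ℝ | ∃ C : Finset (Fin n), C.Nonempty ∧ 0 < S₁ C - S₂ C ∧
          q = (R₁ C - R₂ C) / (S₁ C - S₂ C)}
      = sInf {q : ℝ | ∃ f : Fin n → ℝ, (∀ i, 0 ≤ f i) ∧ 0 < S₁' f - lovasz S₂ f ∧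
          q = (lovasz R₁ f - R₂' f) / (S₁' f - lovasz S₂ f)}) ∧
    (∀ f : Fin n → ℝ, (∀ i, 0 ≤ f i) → 0 < S₁' f - lovasz S₂ f →
      ∃ i : Fin n, 0 < S₁ (thresholdSet f i) - S₂ (thresholdSet f i) ∧
        (R₁ (thresholdSet f i) - R₂ (thresholdSet f i))
            / (S₁ (thresholdSet f i) - S₂ (thresholdSet f i))
          ≤ (lovasz R₁ f - R₂' f) / (S₁' f - lovasz S₂ f)) := by
  have key := key_lemma R₁ R₂ S₁ S₂ hRpos hSpos R₂' S₁' hR₂'conv hS₁'conv hR₂'hom hS₁'hom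
    hR₂'ext hS₁'ext
  refine ⟨?_, fun f hf hD => key f hf hD⟩
  set A := {q : ℝ | ∃ C : Finset (Fin n), C.Nonempty ∧ 0 < S₁ C - S₂ C ∧
      q = (R₁ C - R₂ C) / (S₁ C - S₂ C)} with hA
  set B := {q : ℝ | ∃ f : Fin n → ℝ, (∀ i, 0 ≤ f i) ∧ 0 < S₁' f - lovasz S₂ f ∧
      q = (lovasz R₁ f - R₂' f) / (S₁' f - lovasz S₂ f)} with hB
  have hAB : A ⊆ B := by
    rintro q ⟨C, hC, hpos, rfl⟩
    have h1 : S₁' (ind C) = S₁ C := hS₁'ext C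
    have h2 : R₂' (ind C) = R₂ C := hR₂'ext C
    refine ⟨ind C, fun i => by by_cases h : i ∈ C <;> simp [ind, h], ?_, ?_⟩
    · rw [h1, lovasz_ind S₂ C hC]; exact hpos
    · rw [h1, h2, lovasz_ind S₂ C hC, lovasz_ind R₁ C hC]
  have hB0 : ∀ q ∈ B, 0 ≤ q ∧ ∃ p ∈ A, p ≤ q := by
    rintro q ⟨f, hf, hD, rfl⟩
    obtain ⟨i, hb, hle⟩ := key f hf hD
    refine ⟨le_trans (div_nonneg (hRpos _) hb.le) hle,
      (R₁ (thresholdSet f i) - R₂ (thresholdSet f i))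
        / (S₁ (thresholdSet f i) - S₂ (thresholdSet f i)),
      ⟨thresholdSet f i, thresholdSet_nonempty f i, hb, rfl⟩, hle⟩
  have bddB : BddBelow B := ⟨0, fun q hq => (hB0 q hq).1⟩
  have bddA : BddBelow A := ⟨0, fun p hp => (hB0 p (hAB hp)).1⟩
  by_cases hBne : B.Nonempty
  · have hAne : A.Nonempty := by
      obtain ⟨q, hq⟩ := hBne
      obtain ⟨_, p, hpA, _⟩ := hB0 q hq
      exact ⟨p, hpA⟩
    apply le_antisymm
    · apply le_csInf hBne
      intro q hq
      obtain ⟨_, p, hpA, hpq⟩ := hB0 q hq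
      exact le_trans (csInf_le bddA hpA) hpq
    · exact le_csInf hAne fun p hp => csInf_le bddB (hAB hp)
  · rw [Set.not_nonempty_iff_eq_empty] at hBne
    have hAe : A = ∅ := Set.eq_empty_of_subset_empty (hBne ▸ hAB)
    rw [hAe, hBne]
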